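/- arXiv:1908.06598 — 3 statements merged into one kernel-verified Lean document; each statement's English description precedes it below -/
import Mathlib

section
/- Let (L, ω, ρ) be a ρ-restricted labeled linear order on [n], with L given by π(1) ⋖ π(2) ⋖ ⋯ ⋖ π(n) for a permutation π. Define the tightened restriction ρ̄ recursively by ρ̄(π(n)) = ρ(π(n)); ρ̄(π(i)) = min(ρ̄(π(i+1)), ρ(π(i))) if ω(π(i)) < ω(π(i+1)); and ρ̄(π(i)) = min(ρ̄(π(i+1)) − 1, ρ(π(i))) if ω(π(i)) > ω(π(i+1)). Then the set of ρ-restricted (L,ω)-partitions equals the set of ρ̄-restricted (L,ω)-partitions: A(L,ω,ρ) = A(L,ω,ρ̄). -/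
open Finset MvPolynomial
open scoped Classical

noncomputable def rhoBarAux (ρπ : ℕ → ℤ) (asc : ℕ → Prop) (n : ℕ) : ℕ → ℤ
  | 0 => ρπ n
  | j + 1 =>
    if asc (n - (j + 1)) then min (rhoBarAux ρπ asc n j) (ρπ (n - (j + 1)))
    else min (rhoBarAux ρπ asc n j - 1) (ρπ (n - (j + 1)))

/-- The tightened restriction `ρ̄` in chain coordinates: `rhoBar ρπ asc n i = ρ̄(π(i))`,
where `ρπ i = ρ(π(i))` and `asc i` is the ascent condition at chain position `i`.
It satisfies `ρ̄(π(n)) = ρ(π(n))`, `ρ̄(π(i)) = min (ρ̄(π(i+1))) (ρ(π(i)))` at ascents and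
`ρ̄(π(i)) = min (ρ̄(π(i+1)) - 1) (ρ(π(i)))` at descents. -/
noncomputable def rhoBar (ρπ : ℕ → ℤ) (asc : ℕ → Prop) (n i : ℕ) : ℤ :=
  rhoBarAux ρπ asc n (n - i)

/-- The last chain position of the maximal ascending run starting at position `s`. -/
noncomputable def runEnd (asc : ℕ → Prop) (n s : ℕ) : ℕ :=
  Nat.find (p := fun e => s ≤ e ∧ (n ≤ e ∨ ¬ asc e))
    ⟨max s n, le_max_left _ _, Or.inl (le_max_right _ _)⟩

/-- The reduced weak descent composition: for each run start `s` (i.e. `s = 1` or a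
descent at `s - 1`), place the length of the run starting at `s` in position `ρ̄(π(s))`. -/
noncomputable def rdes (ρπ : ℕ → ℤ) (asc : ℕ → Prop) (n : ℕ) : ℤ →₀ ℕ :=
  ∑ s ∈ (Finset.Icc 1 n).filter (fun s => s = 1 ∨ ¬ asc (s - 1)),
    Finsupp.single (rhoBar ρπ asc n s) (runEnd asc n s - s + 1)

/-- `f` is an `(L,ω)`-partition for the linear order `L : π(1) ⋖ ⋯ ⋖ π(n)` on `[n]` with
labeling `ω`: colors are positive, weakly increasing along covers labeled by ascents of `ω`
and strictly increasing along covers labeled by descents of `ω`. -/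
def IsPPartition (n : ℕ) (π ω : ℕ → ℕ) (f : ℕ → ℤ) : Prop :=
  (∀ i ∈ Set.Icc 1 n, 1 ≤ f i) ∧
  ∀ i : ℕ, 1 ≤ i → i < n →
    (ω (π i) < ω (π (i + 1)) → f (π i) ≤ f (π (i + 1))) ∧
    (ω (π (i + 1)) < ω (π i) → f (π i) < f (π (i + 1)))

lemma rhoBar_last (ρπ : ℕ → ℤ) (asc : ℕ → Prop) (n : ℕ) :
    rhoBar ρπ asc n n = ρπ n := by
  simp [rhoBar, rhoBarAux]

lemma rhoBar_rec (ρπ : ℕ → ℤ) (asc : ℕ → Prop) {n i : ℕ} (hi : i < n) :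
    rhoBar ρπ asc n i =
      if asc i then min (rhoBar ρπ asc n (i + 1)) (ρπ i)
      else min (rhoBar ρπ asc n (i + 1) - 1) (ρπ i) := by
  unfold rhoBar
  have h : n - i = (n - (i + 1)) + 1 := by omega
  have h2 : n - ((n - (i + 1)) + 1) = i := by omega
  rw [h]
  show (if asc (n - ((n - (i+1)) + 1)) then _ else _) = _
  rw [h2]

lemma rhoBar_le (ρπ : ℕ → ℤ) (asc : ℕ → Prop) {n i : ℕ} (hi : i ≤ n) :
    rhoBar ρπ asc n i ≤ ρπ i := by
  rcases eq_or_lt_of_le hi with rfl | hlt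
  · simp [rhoBar_last]
  · rw [rhoBar_rec ρπ asc hlt]
    split_ifs <;> exact min_le_right _ _

/-- For a `ρ`-restricted labeled linear order `(L,ω,ρ)` with
`L : π(1) ⋖ ⋯ ⋖ π(n)`, the set of `ρ`-restricted `(L,ω)`-partitions equals the set of
`ρ̄`-restricted `(L,ω)`-partitions, where `ρ̄` is the tightened restriction. -/
theorem restricted_partitions_eq_tightened (n : ℕ) (π ω : ℕ → ℕ) (ρ : ℕ → ℤ)
    (hπ : Set.BijOn π (Set.Icc 1 n) (Set.Icc 1 n))
    (hω : Set.BijOn ω (Set.Icc 1 n) (Set.Icc 1 n)) :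
    {f : ℕ → ℤ | IsPPartition n π ω f ∧ ∀ i ∈ Set.Icc 1 n, f i ≤ ρ i} =
      {f : ℕ → ℤ | IsPPartition n π ω f ∧ ∀ i ∈ Set.Icc 1 n,
        f (π i) ≤ rhoBar (fun k => ρ (π k)) (fun k => ω (π k) < ω (π (k + 1))) n i} := by
  ext f
  simp only [Set.mem_setOf_eq]
  constructor
  · rintro ⟨hpp, hρ⟩
    refine ⟨hpp, ?_⟩
    intro i hi
    -- downward induction from n
    have key : ∀ j, j ≤ n → ∀ i ∈ Set.Icc 1 n, n - j ≤ i →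
        f (π i) ≤ rhoBar (fun k => ρ (π k)) (fun k => ω (π k) < ω (π (k + 1))) n i := by
      intro j
      induction j with
      | zero =>
        intro _ i hi hni
        have h2 := hi.2
        have : i = n := by omega
        subst this
        rw [rhoBar_last]
        exact hρ _ (hπ.mapsTo hi)
      | succ j ih =>
        intro hjn i hi hni
        rcases eq_or_lt_of_le hi.2 with heq | hlt
        · subst heq
          rw [rhoBar_last]
          exact hρ _ (hπ.mapsTo hi)
        · have h1 := ih (by omega) (i + 1) ⟨by omega, hlt⟩ (by omega)
          rw [rhoBar_rec _ _ hlt]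
          have hmem : π i ∈ Set.Icc 1 n := hπ.mapsTo hi
          have hmem' : π (i + 1) ∈ Set.Icc 1 n := hπ.mapsTo ⟨by omega, hlt⟩
          by_cases hasc : ω (π i) < ω (π (i + 1))
          · rw [if_pos hasc]
            exact le_min (le_trans ((hpp.2 i hi.1 hlt).1 hasc) h1) (hρ _ hmem)
          · rw [if_neg hasc]
            have hne : π i ≠ π (i + 1) := fun h => by
              have := hπ.injOn hi ⟨by omega, hlt⟩ h; omega
            have hωne : ω (π i) ≠ ω (π (i + 1)) := fun h =>
              hne (hω.injOn hmem hmem' h)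
            have hdes : ω (π (i + 1)) < ω (π i) := by omega
            have := (hpp.2 i hi.1 hlt).2 hdes
            exact le_min (by omega) (hρ _ hmem)
    exact key n le_rfl i hi (by omega)
  · rintro ⟨hpp, hρ⟩
    refine ⟨hpp, ?_⟩
    intro i hi
    obtain ⟨j, hj, rfl⟩ := hπ.surjOn hi
    exact le_trans (hρ j hj) (rhoBar_le _ _ hj.2)
end

section
/- Let G be a finite simple graph on [n] with a restriction map ρ: [n] → Z. Then the set of ρ-restricted proper colorings of G decomposes as the disjoint union, over acyclic orientations o of G, of the ρ-restricted colorings compatible with o; moreover every coloring compatible with o has exactly |{i → j in o : i < j}| descents. Consequently X_{G,ρ}(x;t) = Σ_{o ∈ AO(G)} t^{|{i→j in o : i<j}|} Σ_{f compatible with o, f ≤ ρ} x_{f(1)} ⋯ x_{f(n)}. -/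
open Finset MvPolynomial
open scoped Classical

/-- `o` is an orientation of `G`: it directs exactly the edges of `G`, one way each. -/
def IsOrientation {n : ℕ} (G : SimpleGraph (Fin n)) (o : Fin n → Fin n → Bool) : Prop :=
  (∀ i j, o i j = true → G.Adj i j) ∧ ∀ i j, G.Adj i j → (o i j = true ↔ ¬ o j i = true)

/-- `o` is acyclic: no directed cycles. -/
def IsAcyclicOrient {n : ℕ} (o : Fin n → Fin n → Bool) : Prop :=
  ∀ v, ¬ Relation.TransGen (fun i j => o i j = true) v v

/-- `f` is compatible with `o`: every directed edge `i → j` satisfies `f i > f j`. -/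
def Compatible {n : ℕ} (f : Fin n → ℤ) (o : Fin n → Fin n → Bool) : Prop :=
  ∀ i j, o i j = true → f j < f i

/-- The `ρ`-restricted colorings: `f : [n] → ℤ` with `1 ≤ f i ≤ ρ i` for all `i`. -/
noncomputable def colorings (n : ℕ) (ρ : Fin n → ℤ) : Finset (Fin n → ℤ) :=
  Fintype.piFinset fun i => Finset.Icc 1 (ρ i)

def IsProper {n : ℕ} (G : SimpleGraph (Fin n)) (f : Fin n → ℤ) : Prop :=
  ∀ i j, G.Adj i j → f i ≠ f j

/-- The number of descents of `f`: edges `{i,j}` with `i < j` and `f i > f j`. -/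
noncomputable def desG {n : ℕ} (G : SimpleGraph (Fin n)) (f : Fin n → ℤ) : ℕ :=
  ((Finset.univ : Finset (Fin n × Fin n)).filter fun p =>
    p.1 < p.2 ∧ G.Adj p.1 p.2 ∧ f p.2 < f p.1).card

/-- The number of directed edges `i → j` of `o` with `i < j`. -/
noncomputable def ascEdges {n : ℕ} (o : Fin n → Fin n → Bool) : ℕ :=
  ((Finset.univ : Finset (Fin n × Fin n)).filter fun p =>
    p.1 < p.2 ∧ o p.1 p.2 = true).card

/-- `X_{G,ρ}(x;t) = Σ_f t^{des_G(f)} x_{f(1)} ⋯ x_{f(n)}` over `ρ`-restricted proper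
colorings `f` (`Polynomial.X` is `t`). -/
noncomputable def Xchrom {n : ℕ} (G : SimpleGraph (Fin n)) (ρ : Fin n → ℤ) :
    Polynomial (MvPolynomial ℤ ℤ) :=
  ∑ f ∈ (colorings n ρ).filter (fun f => IsProper G f),
    Polynomial.C (∏ i : Fin n, MvPolynomial.X (f i)) * Polynomial.X ^ desG G f


section Aux
variable {n : ℕ}

/-- The canonical orientation induced by a coloring. -/
noncomputable def orientOf (G : SimpleGraph (Fin n)) (f : Fin n → ℤ) :
    Fin n → Fin n → Bool :=
  fun i j => decide (G.Adj i j ∧ f j < f i)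

lemma orientOf_spec (G : SimpleGraph (Fin n)) (f : Fin n → ℤ) (i j : Fin n) :
    orientOf G f i j = true ↔ (G.Adj i j ∧ f j < f i) := by
  simp [orientOf]

lemma compat_transGen {o : Fin n → Fin n → Bool} {f : Fin n → ℤ}
    (hc : Compatible f o) {a b : Fin n}
    (h : Relation.TransGen (fun i j => o i j = true) a b) : f b < f a := by
  induction h with
  | single h => exact hc _ _ h
  | tail _ h ih => exact lt_trans (hc _ _ h) ih

lemma orientOf_isOrientation (G : SimpleGraph (Fin n)) {f : Fin n → ℤ}
    (hf : IsProper G f) : IsOrientation G (orientOf G f) := by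
  constructor
  · intro i j h
    exact ((orientOf_spec G f i j).1 h).1
  · intro i j hadj
    rw [orientOf_spec, orientOf_spec]
    have hne := hf i j hadj
    constructor
    · rintro ⟨-, hlt⟩ ⟨-, hlt'⟩
      exact absurd (lt_trans hlt hlt') (lt_irrefl _)
    · intro h
      refine ⟨hadj, ?_⟩
      by_contra hnot
      exact h ⟨hadj.symm, lt_of_le_of_ne (not_lt.1 hnot) hne⟩

lemma orientOf_compatible (G : SimpleGraph (Fin n)) (f : Fin n → ℤ) :
    Compatible f (orientOf G f) := fun i j h => ((orientOf_spec G f i j).1 h).2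

lemma orientOf_acyclic (G : SimpleGraph (Fin n)) (f : Fin n → ℤ) :
    IsAcyclicOrient (orientOf G f) := by
  intro v h
  exact absurd (compat_transGen (orientOf_compatible G f) h) (lt_irrefl _)

lemma compatible_isProper {G : SimpleGraph (Fin n)} {o : Fin n → Fin n → Bool}
    {f : Fin n → ℤ} (ho : IsOrientation G o) (hc : Compatible f o) : IsProper G f := by
  intro i j hadj
  rcases Bool.eq_false_or_eq_true (o i j) with h | h
  · exact (ne_of_lt (hc i j h)).symm
  · have hji : o j i = true := by
      by_contra hn
      exact absurd ((ho.2 i j hadj).2 hn) (by simp [h])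
    exact ne_of_lt (hc j i hji)

lemma orient_eq {G : SimpleGraph (Fin n)} {o : Fin n → Fin n → Bool} {f : Fin n → ℤ}
    (ho : IsOrientation G o) (hc : Compatible f o) : o = orientOf G f := by
  funext i j
  rw [Bool.eq_iff_iff, orientOf_spec]
  constructor
  · intro h
    exact ⟨ho.1 i j h, hc i j h⟩
  · rintro ⟨hadj, hlt⟩
    by_contra hn
    have hji : o j i = true := by
      by_contra hn'
      exact hn ((ho.2 i j hadj).2 hn')
    exact absurd (lt_trans hlt (hc j i hji)) (lt_irrefl _)

lemma des_eq_asc {G : SimpleGraph (Fin n)} {o : Fin n → Fin n → Bool} {f : Fin n → ℤ}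
    (ho : IsOrientation G o) (hc : Compatible f o) : desG G f = ascEdges o := by
  unfold desG ascEdges
  congr 1
  apply Finset.filter_congr
  intro p _
  have key : (G.Adj p.1 p.2 ∧ f p.2 < f p.1) ↔ o p.1 p.2 = true := by
    have := orient_eq ho hc
    rw [this, orientOf_spec]
  constructor
  · rintro ⟨h1, h2⟩
    exact ⟨h1, key.1 h2⟩
  · rintro ⟨h1, h2⟩
    exact ⟨h1, (key.2 h2).1, (key.2 h2).2⟩

end Aux

/-- The `ρ`-restricted proper colorings decompose over acyclic
orientations: every such coloring is compatible with a unique acyclic orientation, every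
coloring compatible with an acyclic orientation `o` has exactly `#{i → j in o : i < j}`
descents, and consequently
`X_{G,ρ}(x;t) = Σ_{o ∈ AO(G)} t^{#{i→j in o : i<j}} Σ_{f compatible with o, f ≤ ρ} x^f`. -/
theorem chromatic_orientation_decomposition {n : ℕ} (G : SimpleGraph (Fin n))
    (ρ : Fin n → ℤ) :
    (∀ f ∈ colorings n ρ, IsProper G f →
      ∃! o : Fin n → Fin n → Bool,
        (IsOrientation G o ∧ IsAcyclicOrient o) ∧ Compatible f o) ∧
    (∀ o : Fin n → Fin n → Bool, IsOrientation G o → IsAcyclicOrient o →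
      ∀ f ∈ colorings n ρ, Compatible f o → desG G f = ascEdges o) ∧
    Xchrom G ρ =
      ∑ o ∈ (Finset.univ : Finset (Fin n → Fin n → Bool)).filter
          (fun o => IsOrientation G o ∧ IsAcyclicOrient o),
        Polynomial.X ^ ascEdges o *
          ∑ f ∈ (colorings n ρ).filter (fun f => Compatible f o),
            Polynomial.C (∏ i : Fin n, MvPolynomial.X (f i)) := by
  have exu : ∀ f ∈ colorings n ρ, IsProper G f →
      ∃! o : Fin n → Fin n → Bool,
        (IsOrientation G o ∧ IsAcyclicOrient o) ∧ Compatible f o := by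
    intro f _ hf
    refine ⟨orientOf G f, ⟨⟨orientOf_isOrientation G hf, orientOf_acyclic G f⟩,
      orientOf_compatible G f⟩, ?_⟩
    rintro o ⟨⟨ho, -⟩, hc⟩
    exact orient_eq ho hc
  refine ⟨exu, fun o ho _ f _ hc => des_eq_asc ho hc, ?_⟩
  have hmap : ∀ f ∈ (colorings n ρ).filter (fun f => IsProper G f),
      orientOf G f ∈ (Finset.univ : Finset (Fin n → Fin n → Bool)).filter
        (fun o => IsOrientation G o ∧ IsAcyclicOrient o) := by
    intro f hf
    rw [Finset.mem_filter] at hf ⊢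
    exact ⟨Finset.mem_univ _, orientOf_isOrientation G hf.2, orientOf_acyclic G f⟩
  rw [Xchrom, ← Finset.sum_fiberwise_of_maps_to hmap]
  apply Finset.sum_congr rfl
  intro o ho
  rw [Finset.mem_filter] at ho
  obtain ⟨-, hor, hac⟩ := ho
  have hset : ((colorings n ρ).filter (fun f => IsProper G f)).filter
      (fun f => orientOf G f = o) = (colorings n ρ).filter (fun f => Compatible f o) := by
    ext f
    simp only [Finset.mem_filter, Finset.filter_filter]
    constructor
    · rintro ⟨hmem, -, heq⟩
      exact ⟨hmem, heq ▸ orientOf_compatible G f⟩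
    · rintro ⟨hmem, hc⟩
      exact ⟨hmem, compatible_isProper hor hc, (orient_eq hor hc).symm⟩
  rw [hset, Finset.mul_sum]
  apply Finset.sum_congr rfl
  intro f hf
  rw [Finset.mem_filter] at hf
  rw [des_eq_asc hor hf.2, mul_comm]
end

section
/- Let a be a tail-strong weak composition indexed by Z. Then applying the substitution η_0 (setting x_i = 0 for all i > 0) to the backstable slide series ←F_a(x) yields the fundamental quasisymmetric function: η_0(←F_a(x)) = F_{flat(a)}(x_−). -/
open Finset MvPolynomial
open scoped Classical

/-- The strong composition underlying a weak composition (entries listed in increasing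
order of position, zeros omitted). -/
noncomputable def wcFlat (a : ℤ →₀ ℕ) : List ℕ :=
  (a.support.sort (· ≤ ·)).map fun i => a i

/-- `β` refines `α` iff adjacent parts of `β` can be iteratively combined to give `α`. -/
def wcRefines (β α : List ℕ) : Prop :=
  ∃ L : List (List ℕ), (∀ l ∈ L, l ≠ []) ∧ L.flatten = β ∧ L.map List.sum = α

/-- `b ≤_c a`: `flat b` refines `flat a` and `b` is weakly smaller than `a` in reverse
lexicographic order (at the largest position where they differ, `b` is smaller). -/
def wcLeC (b a : ℤ →₀ ℕ) : Prop :=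
  wcRefines (wcFlat b) (wcFlat a) ∧
    (b = a ∨ ∃ i : ℤ, b i < a i ∧ ∀ j : ℤ, i < j → b j = a j)

/-- Encode `v : Fin r → ℕ` as a weak composition supported in `{1,…,r}` (variable `i`
corresponds to position `i+1`). -/
noncomputable def toWeakComp (r : ℕ) (v : Fin r → ℕ) : ℤ →₀ ℕ :=
  Finsupp.embDomain
    ⟨fun i : Fin r => ((i : ℕ) : ℤ) + 1, fun i j h => by
      apply Fin.ext
      simp only at h
      omega⟩
    ((Finsupp.equivFunOnFinite.symm v : Fin r →₀ ℕ))

noncomputable def wcWeight (a : ℤ →₀ ℕ) : ℕ := a.sum fun _ m => m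

/-- The fundamental slide polynomial `F_a(x_1,…,x_r) = Σ_{b ∈ C_{≤a}^{(r)}} x^b`, the sum
over weak compositions `b ≤_c a` with support contained in `{1,…,r}` (variable `i : Fin r`
represents `x_{i+1}`). -/
noncomputable def slide (r : ℕ) (a : ℤ →₀ ℕ) : MvPolynomial (Fin r) ℤ :=
  ∑ v ∈ (Finset.Nat.antidiagonalTuple r (wcWeight a)).filter
      fun v => wcLeC (toWeakComp r v) a,
    MvPolynomial.monomial (Finsupp.equivFunOnFinite.symm v : Fin r →₀ ℕ) (1 : ℤ)

/-- The backstable fundamental slide series `←F_a(x) = Σ_{b ≤_c a} x^b`, as a formal power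
series in the doubly infinite alphabet `{x_i : i ∈ ℤ}` (its coefficient at the monomial
`x^b` is `1` iff `b ≤_c a`). -/
noncomputable def backSlide (a : ℤ →₀ ℕ) : MvPowerSeries ℤ ℤ :=
  fun b => if wcLeC b a then 1 else 0

/-- Gessel's fundamental quasisymmetric function `F_β(x_-)` in the variables `{x_i : i ≤ 0}`:
the sum of all monomials `x^b` with `b` supported in nonpositive positions and `flat b`
refining `β`. -/
noncomputable def fundQ (β : List ℕ) : MvPowerSeries ℤ ℤ :=
  fun b => if (∀ i ∈ b.support, i ≤ 0) ∧ wcRefines (wcFlat b) β then 1 else 0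

/-- The fundamental slide polynomial `F_a(x_1,…,x_r)` viewed inside the big power series
ring: the sum of monomials `x^b` over `b ∈ C_{≤a}^{(r)}`. -/
noncomputable def posSlide (r : ℕ) (a : ℤ →₀ ℕ) : MvPowerSeries ℤ ℤ :=
  fun b => if (∀ i ∈ b.support, 1 ≤ i ∧ i ≤ (r : ℤ)) ∧ wcLeC b a then 1 else 0

/-- The substitution `η₀` setting `x_i = 0` for all `i > 0`. -/
noncomputable def eta0 (f : MvPowerSeries ℤ ℤ) : MvPowerSeries ℤ ℤ :=
  fun b => if ∀ i ∈ b.support, i ≤ 0 then f b else 0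

/-- A weak composition is tail-strong if a positive entry at a nonpositive position forces
all entries between it and position `0` to be positive. -/
def TailStrong (a : ℤ →₀ ℕ) : Prop :=
  ∀ i : ℤ, i ≤ 0 → 0 < a i → ∀ j : ℤ, i ≤ j → j ≤ 0 → 0 < a j

noncomputable def tailSum (c : ℤ →₀ ℕ) (t : ℤ) : ℕ :=
  ∑ j ∈ c.support.filter (fun j => t ≤ j), c j

lemma sum_sort_filter (c : ℤ →₀ ℕ) (t : ℤ) :
    (((c.support.sort (· ≤ ·)).filter (fun j => decide (t ≤ j))).map c).sum
      = tailSum c t := by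
  rw [tailSum, Finset.sum_eq_multiset_sum, Finset.filter_val, ← Finset.sort_eq c.support (· ≤ ·),
      Multiset.filter_coe, Multiset.map_coe, Multiset.sum_coe]

lemma sum_sort (c : ℤ →₀ ℕ) : (wcFlat c).sum = ∑ j ∈ c.support, c j := by
  rw [wcFlat, Finset.sum_eq_multiset_sum, ← Finset.sort_eq c.support (· ≤ ·),
      Multiset.map_coe, Multiset.sum_coe]

/-- in a ≤-sorted list, upward-closed filters are suffixes -/
lemma sorted_filter_eq_drop (t : ℤ) :
    ∀ (l : List ℤ), l.Pairwise (· ≤ ·) →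
      ∃ k, l.filter (fun j => decide (t ≤ j)) = l.drop k := by
  intro l
  induction l with
  | nil => exact fun _ => ⟨0, rfl⟩
  | cons x l ih =>
    intro hs
    rw [List.pairwise_cons] at hs
    by_cases hx : t ≤ x
    · refine ⟨0, ?_⟩
      rw [List.drop_zero, List.filter_eq_self]
      intro a ha
      simp only [List.mem_cons] at ha
      rcases ha with rfl | ha
      · simpa using hx
      · simpa using le_trans hx (hs.1 a ha)
    · obtain ⟨k, hk⟩ := ih hs.2
      refine ⟨k + 1, ?_⟩
      rw [List.filter_cons_of_neg (by simpa using hx), hk, List.drop_succ_cons]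

/-- in a <-sorted list, every suffix is an upward-closed filter -/
lemma sorted_drop_eq_filter :
    ∀ (l : List ℤ), l.Pairwise (· < ·) → ∀ k (hk : k < l.length),
      l.filter (fun j => decide (l.get ⟨k, hk⟩ ≤ j)) = l.drop k := by
  intro l
  induction l with
  | nil => intro _ k hk; simp at hk
  | cons x l ih =>
    intro hs k hk
    rw [List.pairwise_cons] at hs
    match k with
    | 0 =>
      simp only [List.get, List.drop_zero]
      rw [List.filter_eq_self]
      intro a ha
      simp only [List.mem_cons] at ha
      rcases ha with rfl | ha
      · simp
      · simpa using le_of_lt (hs.1 a ha)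
    | k + 1 =>
      have hk' : k < l.length := by simpa using hk
      have hget : (x :: l).get ⟨k + 1, hk⟩ = l.get ⟨k, hk'⟩ := rfl
      have hxlt : x < l.get ⟨k, hk'⟩ := hs.1 _ (l.get_mem _)
      rw [hget, List.filter_cons_of_neg (by simpa using not_le.2 hxlt), List.drop_succ_cons]
      exact ih hs.2 k hk'

/-- every tail sum of `c` is a suffix sum of `wcFlat c` -/
lemma tailSum_eq_drop (c : ℤ →₀ ℕ) (t : ℤ) :
    ∃ k, tailSum c t = ((wcFlat c).drop k).sum := by
  obtain ⟨k, hk⟩ := sorted_filter_eq_drop t _ (Finset.pairwise_sort c.support (· ≤ ·))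
  exact ⟨k, by rw [← sum_sort_filter, hk, wcFlat, List.map_drop]⟩

/-- every suffix sum of `wcFlat c` is a tail sum of `c` -/
lemma drop_eq_tailSum (c : ℤ →₀ ℕ) (k : ℕ) :
    ∃ t, ((wcFlat c).drop k).sum = tailSum c t := by
  set l := c.support.sort (· ≤ ·) with hl
  by_cases hk : k < l.length
  · refine ⟨l.get ⟨k, hk⟩, ?_⟩
    rw [← sum_sort_filter, ← hl,
      sorted_drop_eq_filter l (Finset.sortedLT_sort c.support).pairwise k hk, wcFlat, ← hl,
      List.map_drop]
  · -- suffix is empty; choose t above all of the support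
    obtain ⟨t, ht⟩ : ∃ t : ℤ, ∀ j ∈ c.support, j < t := by
      rcases c.support.eq_empty_or_nonempty with h | h
      · exact ⟨0, by simp [h]⟩
      · exact ⟨c.support.max' h + 1, fun j hj => by
          have := Finset.le_max' c.support j hj; omega⟩
    refine ⟨t, ?_⟩
    have h1 : (wcFlat c).drop k = [] := by
      apply List.drop_eq_nil_of_le
      simpa [wcFlat, ← hl] using not_lt.1 hk
    have h2 : c.support.filter (fun j => t ≤ j) = ∅ := by
      apply Finset.filter_false_of_mem
      intro j hj
      have := ht j hj; omega
    rw [h1, tailSum, h2]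
    simp

lemma refines_drop {β α : List ℕ} (h : wcRefines β α) (k : ℕ) :
    ∃ m, (α.drop k).sum = (β.drop m).sum := by
  obtain ⟨L, -, hβ, hα⟩ := h
  refine ⟨((L.take k).flatten).length, ?_⟩
  have h1 : α.drop k = (L.drop k).map List.sum := by rw [← hα, List.map_drop]
  have h2 : β = (L.take k).flatten ++ (L.drop k).flatten := by
    rw [← List.flatten_append, List.take_append_drop, hβ]
  rw [h1, h2, List.drop_left, ← List.sum_flatten]

lemma refines_sum {β α : List ℕ} (h : wcRefines β α) : β.sum = α.sum := by
  obtain ⟨L, -, hβ, hα⟩ := h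
  rw [← hβ, ← hα, List.sum_flatten]

lemma tailSum_mono (c : ℤ →₀ ℕ) {t u : ℤ} (h : t ≤ u) : tailSum c u ≤ tailSum c t := by
  apply Finset.sum_le_sum_of_subset
  intro j hj
  simp only [Finset.mem_filter] at *
  exact ⟨hj.1, le_trans h hj.2⟩

lemma tailSum_step (c : ℤ →₀ ℕ) (i : ℤ) : tailSum c i = c i + tailSum c (i + 1) := by
  have h1 : tailSum c i = ∑ j ∈ (insert i c.support).filter (fun j => i ≤ j), c j := by
    apply Finset.sum_subset
    · exact Finset.filter_subset_filter _ (Finset.subset_insert _ _)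
    · intro x hx hnx
      simp only [Finset.mem_filter, Finset.mem_insert] at hx hnx
      by_contra hc
      exact hnx ⟨Finsupp.mem_support_iff.2 hc, hx.2⟩
  have h2 : (insert i c.support).filter (fun j => i ≤ j)
      = insert i ((insert i c.support).filter (fun j => i + 1 ≤ j)) := by
    ext x
    simp only [Finset.mem_filter, Finset.mem_insert]
    constructor
    · rintro ⟨hx, hle⟩
      rcases eq_or_lt_of_le hle with h | h
      · exact Or.inl h.symm
      · exact Or.inr ⟨hx, by omega⟩
    · rintro (rfl | ⟨hx, hle⟩)
      · exact ⟨Or.inl rfl, le_refl _⟩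
      · exact ⟨hx, by omega⟩
  have h3 : i ∉ (insert i c.support).filter (fun j => i + 1 ≤ j) := by
    simp
  have h4 : ∑ j ∈ (insert i c.support).filter (fun j => i + 1 ≤ j), c j
      = tailSum c (i + 1) := by
    symm
    apply Finset.sum_subset
    · exact Finset.filter_subset_filter _ (Finset.subset_insert _ _)
    · intro x hx hnx
      simp only [Finset.mem_filter, Finset.mem_insert] at hx hnx
      by_contra hc
      exact hnx ⟨Finsupp.mem_support_iff.2 hc, hx.2⟩
  rw [h1, h2, Finset.sum_insert h3, h4]

lemma tailSum_congr {a b : ℤ →₀ ℕ} {t : ℤ} (h : ∀ j, t ≤ j → b j = a j) :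
    tailSum b t = tailSum a t := by
  have key : ∀ (c : ℤ →₀ ℕ), c = a ∨ c = b →
      tailSum c t = ∑ j ∈ (a.support ∪ b.support).filter (fun j => t ≤ j), c j := by
    intro c _
    apply Finset.sum_subset
    · apply Finset.filter_subset_filter
      rcases ‹c = a ∨ c = b› with rfl | rfl
      · exact Finset.subset_union_left
      · exact Finset.subset_union_right
    · intro x hx hnx
      simp only [Finset.mem_filter, Finset.mem_union] at hx hnx
      by_contra hc
      exact hnx ⟨Finsupp.mem_support_iff.2 hc, hx.2⟩
  rw [key b (Or.inr rfl), key a (Or.inl rfl)]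
  apply Finset.sum_congr rfl
  intro x hx
  simp only [Finset.mem_filter] at hx
  exact h x hx.2

lemma sum_split (c : ℤ →₀ ℕ) (t : ℤ) :
    tailSum c t + ∑ j ∈ c.support.filter (fun j => ¬ t ≤ j), c j = ∑ j ∈ c.support, c j := by
  exact Finset.sum_filter_add_sum_filter_not _ _ _

lemma key_lemma (a b : ℤ →₀ ℕ) (hts : TailStrong a) (hsupp : ∀ i ∈ b.support, i ≤ 0)
    (href : wcRefines (wcFlat b) (wcFlat a)) (hne : b ≠ a) :
    ∃ i, b i < a i ∧ ∀ j : ℤ, i < j → b j = a j := by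
  -- the set of positions where a and b differ
  set D := (a.support ∪ b.support).filter (fun i => b i ≠ a i) with hD
  have hDne : D.Nonempty := by
    obtain ⟨i, hi⟩ : ∃ i, b i ≠ a i := by
      by_contra h
      push_neg at h
      exact hne (Finsupp.ext h)
    refine ⟨i, ?_⟩
    simp only [hD, Finset.mem_filter, Finset.mem_union, Finsupp.mem_support_iff]
    refine ⟨?_, hi⟩
    by_contra h
    push_neg at h
    rw [h.1, h.2] at hi
    exact hi rfl
  set i := D.max' hDne with hi
  have hiD : i ∈ D := D.max'_mem hDne
  have hne0 : b i ≠ a i := (Finset.mem_filter.1 hiD).2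
  have h_above : ∀ j : ℤ, i < j → b j = a j := by
    intro j hj
    by_contra h
    have hjD : j ∈ D := by
      simp only [hD, Finset.mem_filter, Finset.mem_union, Finsupp.mem_support_iff]
      refine ⟨?_, h⟩
      by_contra h'
      push_neg at h'
      rw [h'.1, h'.2] at h
      exact h rfl
    exact absurd (D.le_max' j hjD) (by omega)
  refine ⟨i, ?_, h_above⟩
  rcases lt_trichotomy (b i) (a i) with h | h | h
  · exact h
  · exact absurd h hne0
  -- now derive a contradiction from b i > a i
  exfalso
  have hbpos : 0 < b i := lt_of_le_of_lt (Nat.zero_le _) h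
  have hi0 : i ≤ 0 := hsupp i (Finsupp.mem_support_iff.2 (by omega))
  set S := tailSum a (i + 1) with hS
  have htb : tailSum b (i + 1) = S := tailSum_congr (fun j hj => h_above j (by omega))
  have hta_i : tailSum a i = a i + S := tailSum_step a i
  have htb_i : tailSum b i = b i + S := by rw [tailSum_step b i, htb]
  by_cases ha : a i = 0
  · -- use tail-strongness: there must be a positive entry of a below i
    have htot : ∑ j ∈ b.support, b j = ∑ j ∈ a.support, a j := by
      rw [← sum_sort, ← sum_sort]; exact refines_sum href
    have hsplit_a := sum_split a i
    have hsplit_b := sum_split b i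
    have hhead : ∑ j ∈ a.support.filter (fun j => ¬ i ≤ j), a j
        = ∑ j ∈ b.support.filter (fun j => ¬ i ≤ j), b j + b i := by omega
    have hpos : 0 < ∑ j ∈ a.support.filter (fun j => ¬ i ≤ j), a j := by omega
    obtain ⟨k, hk, hk0⟩ := Finset.exists_ne_zero_of_sum_ne_zero (by omega :
      ∑ j ∈ a.support.filter (fun j => ¬ i ≤ j), a j ≠ 0)
    simp only [Finset.mem_filter, not_le] at hk
    have : 0 < a i := hts k (by omega) (by omega) i (by omega) hi0
    omega
  · -- a i > 0 : S + a i is a suffix sum of flat a, hence of flat b, i.e. a tailSum of b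
    obtain ⟨k, hk⟩ := tailSum_eq_drop a i
    obtain ⟨m, hm⟩ := refines_drop href k
    obtain ⟨t, ht⟩ := drop_eq_tailSum b m
    have heq : tailSum b t = a i + S := by rw [← ht, ← hm, ← hk, hta_i]
    rcases le_or_gt t i with hti | hti
    · have := tailSum_mono b hti
      omega
    · have := tailSum_mono b (by omega : i + 1 ≤ t)
      omega


/-- For a tail-strong weak composition `a`, setting `x_i = 0` for all
`i > 0` in the backstable slide series yields the fundamental quasisymmetric function:
`η₀(←F_a(x)) = F_{flat(a)}(x_-)`. -/
theorem eta0_backSlide (a : ℤ →₀ ℕ) (hts : TailStrong a) :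
    eta0 (backSlide a) = fundQ (wcFlat a) := by
  funext b
  show (if ∀ i ∈ b.support, i ≤ 0 then (if wcLeC b a then (1:ℤ) else 0) else 0)
      = if (∀ i ∈ b.support, i ≤ 0) ∧ wcRefines (wcFlat b) (wcFlat a) then 1 else 0
  by_cases hb : ∀ i ∈ b.support, i ≤ 0
  · rw [if_pos hb]
    by_cases href : wcRefines (wcFlat b) (wcFlat a)
    · have hle : wcLeC b a := by
        refine ⟨href, ?_⟩
        by_cases hba : b = a
        · exact Or.inl hba
        · exact Or.inr (key_lemma a b hts hb href hba)
      rw [if_pos hle, if_pos (⟨hb, href⟩ : (∀ i ∈ b.support, i ≤ 0) ∧ wcRefines (wcFlat b) (wcFlat a))]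
    · rw [if_neg, if_neg]
      · rintro ⟨-, h2⟩; exact href h2
      · rintro ⟨h1, -⟩; exact href h1
  · rw [if_neg hb, if_neg]
    rintro ⟨h1, -⟩; exact hb h1
end
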